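/- Let F be any field, G any finite group, f a nonzero element of the group algebra F G, and F G·f the left ideal generated by f. Then |supp(f)| · dim_F (F G·f) ≥ |G| + |supp(f)| − |G_{supp(f)}|, where supp(f) = {α ∈ G : f(α) ≠ 0} (writing f = Σ_{α∈G} f(α)·α) and G_{supp(f)} = {α ∈ G : supp(f)·α = supp(f)} is the right stabilizer of supp(f). -/

import Mathlib

open Module Submodule Finset

theorem stmt12 {G F : Type*} [Group G] [Fintype G] [Field F]
    (f : MonoidAlgebra F G) (hf : f ≠ 0) :
    f.coeff.support.card *
        Module.finrank F
          ((Submodule.span (MonoidAlgebra F G) {f}).restrictScalars F) +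
      {α : G | (fun β => β * α) '' (↑f.coeff.support : Set G) = ↑f.coeff.support}.ncard
      ≥ Fintype.card G + f.coeff.support.card := by
  classical
  have : FiniteDimensional F (MonoidAlgebra F G) :=
    Module.Finite.equiv ((Finsupp.linearEquivFunOnFinite F F G).symm.trans (MonoidAlgebra.coeffLinearEquiv F).symm)
  rw [ge_iff_le]
  set S : Finset G := f.coeff.support with hS
  set Hs : Set G := {α : G | (fun β => β * α) '' (↑S : Set G) = ↑S} with hHs
  set I : Submodule F (MonoidAlgebra F G) :=
    (Submodule.span (MonoidAlgebra F G) {f}).restrictScalars F with hI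
  set d : ℕ := Module.finrank F I with hd
  obtain ⟨s₀, hs₀⟩ : S.Nonempty := Finsupp.support_nonempty_iff.2 (fun h => hf (MonoidAlgebra.coeff_eq_zero.1 h))
  set v : G → MonoidAlgebra F G := fun g => MonoidAlgebra.single g 1 * f with hv
  have hvapp : ∀ g x, (v g).coeff x = f.coeff (g⁻¹ * x) := by
    intro g x; simp [hv]
  have hvsupp : ∀ g x, x ∈ (v g).coeff.support ↔ g⁻¹ * x ∈ S := by
    intro g x
    rw [Finsupp.mem_support_iff, hvapp, hS, Finsupp.mem_support_iff]
  have hvsupp' : ∀ g, (v g).coeff.support = S.image (fun s => g * s) := by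
    intro g; ext x
    rw [hvsupp, Finset.mem_image]
    constructor
    · intro h; exact ⟨g⁻¹ * x, h, by group⟩
    · rintro ⟨s, hs, rfl⟩; simpa using hs
  have hvcard : ∀ g, (v g).coeff.support.card = S.card := by
    intro g; rw [hvsupp']
    exact Finset.card_image_of_injective _ (mul_right_injective g)
  have hvI : ∀ g, v g ∈ I := by
    intro g
    rw [hI, Submodule.restrictScalars_mem]
    exact Submodule.smul_mem _ (MonoidAlgebra.single g 1)
      (Submodule.mem_span_singleton_self f)
  obtain ⟨b, hbsub, hbspan, hbli⟩ := exists_linearIndependent F (Set.range v)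
  have hbfin : b.Finite := (Set.finite_range v).subset hbsub
  set s' : Finset (MonoidAlgebra F G) := hbfin.toFinset with hs'
  have hs'coe : (↑s' : Set (MonoidAlgebra F G)) = b := hbfin.coe_toFinset
  have hs'range : ∀ w ∈ s', w ∈ Set.range v := by
    intro w hw
    exact hbsub (hbfin.mem_toFinset.1 hw)
  set k : ℕ := s'.card with hk
  -- k ≤ d
  have hli' : LinearIndependent F ((↑) : (↑s' : Set (MonoidAlgebra F G)) → MonoidAlgebra F G) := by
    rw [hs'coe]; exact hbli
  have hkd : k ≤ d := by
    have h1 : Module.finrank F (Submodule.span F (↑s' : Set (MonoidAlgebra F G))) = k :=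
      finrank_span_finset_eq_card hli'
    have h2 : Submodule.span F (↑s' : Set (MonoidAlgebra F G)) ≤ I := by
      rw [hs'coe, hbspan, Submodule.span_le]
      rintro _ ⟨g, rfl⟩; exact hvI g
    rw [← h1, hd]
    exact Submodule.finrank_mono h2
  have hvmem : ∀ g, v g ∈ Submodule.span F (↑s' : Set (MonoidAlgebra F G)) := by
    intro g; rw [hs'coe, hbspan]; exact Submodule.subset_span (Set.mem_range_self g)
  -- multiplicity
  set m : G → ℕ := fun x => (s'.filter (fun w => x ∈ w.coeff.support)).card with hm
  have hsupp_span : ∀ u ∈ Submodule.span F (↑s' : Set (MonoidAlgebra F G)),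
      (u : MonoidAlgebra F G).coeff.support ⊆ s'.biUnion (fun w => w.coeff.support) := by
    intro u hu
    obtain ⟨c, -, hc⟩ := mem_span_finset.1 hu
    rw [← hc]
    simp only [MonoidAlgebra.coeff_sum, MonoidAlgebra.coeff_smul]
    refine (Finsupp.support_finset_sum).trans ?_
    intro x hx
    rw [Finset.mem_biUnion] at hx ⊢
    obtain ⟨w, hw, hxw⟩ := hx
    exact ⟨w, hw, Finsupp.support_smul hxw⟩
  have hcov : ∀ x : G, ∃ w ∈ s', x ∈ w.coeff.support := by
    intro x
    have hx : x ∈ (v (x * s₀⁻¹)).coeff.support := by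
      rw [hvsupp]
      have : (x * s₀⁻¹)⁻¹ * x = s₀ := by group
      rw [this]; exact hs₀
    have := hsupp_span _ (hvmem (x * s₀⁻¹)) hx
    rw [Finset.mem_biUnion] at this
    exact this
  have hm1 : ∀ x, 1 ≤ m x := by
    intro x
    obtain ⟨w, hw, hxw⟩ := hcov x
    exact Finset.card_pos.2 ⟨w, Finset.mem_filter.2 ⟨hw, hxw⟩⟩
  have huniq : ∀ x, m x = 1 → ∀ w ∈ s', ∀ w' ∈ s',
      x ∈ w.coeff.support → x ∈ w'.coeff.support → w = w' := by
    intro x hx w hw w' hw' h1 h2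
    exact Finset.card_le_one.1 hx.le w (Finset.mem_filter.2 ⟨hw, h1⟩)
      w' (Finset.mem_filter.2 ⟨hw', h2⟩)
  -- private sets
  set PP : MonoidAlgebra F G → Finset G := fun w => w.coeff.support.filter (fun x => m x = 1) with hPP
  have hkey : ∀ w ∈ s', ∀ p ∈ PP w, ∀ q ∈ PP w, ∀ g : G,
      p ∈ (v g).coeff.support → q ∈ (v g).coeff.support := by
    intro w hw p hp q hq g hpg
    obtain ⟨c, -, hc⟩ := mem_span_finset.1 (hvmem g)
    rw [hPP, Finset.mem_filter] at hp hq
    have heval : ∀ y : G, y ∈ w.coeff.support → m y = 1 → (v g).coeff y = c w * w.coeff y := by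
      intro y hyw hy1
      rw [← hc, MonoidAlgebra.coeff_sum, Finsupp.finset_sum_apply]
      rw [Finset.sum_eq_single_of_mem w hw]
      · rw [MonoidAlgebra.coeff_smul_apply, smul_eq_mul]
      · intro w' hw' hne
        have hnot : y ∉ w'.coeff.support := fun hmem => hne (huniq y hy1 w' hw' w hw hmem hyw)
        rw [Finsupp.notMem_support_iff] at hnot
        rw [MonoidAlgebra.coeff_smul_apply, hnot, smul_zero]
    have hcw : c w ≠ 0 := by
      have h1 := Finsupp.mem_support_iff.1 hpg
      rw [heval p hp.1 hp.2] at h1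
      exact fun h => h1 (by simp [h])
    rw [Finsupp.mem_support_iff, heval q hq.1 hq.2]
    exact mul_ne_zero hcw (Finsupp.mem_support_iff.1 hq.1)
  have hHmem : ∀ w ∈ s', ∀ p ∈ PP w, ∀ q ∈ PP w, (q⁻¹ * p) ∈ Hs := by
    intro w hw p hp q hq
    have hiff : ∀ g : G, g⁻¹ * p ∈ S ↔ g⁻¹ * q ∈ S := by
      intro g
      constructor
      · intro h; exact (hvsupp g q).1 (hkey w hw p hp q hq g ((hvsupp g p).2 h))
      · intro h; exact (hvsupp g p).1 (hkey w hw q hq p hp g ((hvsupp g q).2 h))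
    show (fun β => β * (q⁻¹ * p)) '' (↑S : Set G) = ↑S
    apply Set.Subset.antisymm
    · rintro _ ⟨s, hs, rfl⟩
      have e1 : (q * s⁻¹)⁻¹ * q = s := by group
      have e2 : (q * s⁻¹)⁻¹ * p = s * (q⁻¹ * p) := by group
      have h2 := (hiff (q * s⁻¹)).2 (by rw [e1]; exact hs)
      rw [e2] at h2
      exact h2
    · intro s hs
      have e1 : (p * s⁻¹)⁻¹ * p = s := by group
      have e2 : (p * s⁻¹)⁻¹ * q = s * p⁻¹ * q := by group
      have h2 := (hiff (p * s⁻¹)).1 (by rw [e1]; exact hs)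
      rw [e2] at h2
      exact ⟨s * p⁻¹ * q, h2, by group⟩
  have hPPcard : ∀ w ∈ s', (PP w).card ≤ Hs.ncard := by
    intro w hw
    rcases (PP w).eq_empty_or_nonempty with he | ⟨q, hq⟩
    · simp [he]
    · have hsub : (↑(PP w) : Set G) ⊆ (fun α => q * α) '' Hs := by
        intro p hp
        exact ⟨q⁻¹ * p, hHmem w hw p (Finset.mem_coe.1 hp) q hq, by group⟩
      calc (PP w).card = (↑(PP w) : Set G).ncard := (Set.ncard_coe_finset _).symm
        _ ≤ ((fun α => q * α) '' Hs).ncard := Set.ncard_le_ncard hsub (Set.toFinite _)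
        _ = Hs.ncard := Set.ncard_image_of_injective _ (mul_right_injective q)
  have hHS : Hs.ncard ≤ S.card := by
    have hsub : (fun α => s₀ * α) '' Hs ⊆ (↑S : Set G) := by
      rintro _ ⟨α, hα, rfl⟩
      have himg : (fun β => β * α) '' (↑S : Set G) = ↑S := hα
      rw [← himg]
      exact ⟨s₀, hs₀, rfl⟩
    calc Hs.ncard = ((fun α => s₀ * α) '' Hs).ncard :=
          (Set.ncard_image_of_injective _ (mul_right_injective s₀)).symm
      _ ≤ (↑S : Set G).ncard := Set.ncard_le_ncard hsub (Set.toFinite _)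
      _ = S.card := Set.ncard_coe_finset _
  -- double counting
  set n : G → ℕ := fun x => (s'.filter (fun w => x ∈ PP w)).card with hn
  have hsum1 : ∑ w ∈ s', w.coeff.support.card = ∑ x : G, m x := by
    have e : ∀ w : MonoidAlgebra F G, w.coeff.support.card = ∑ x : G, if x ∈ w.coeff.support then 1 else 0 := by
      intro w
      rw [← Finset.card_filter]
      congr 1
      ext x
      simp
    calc ∑ w ∈ s', w.coeff.support.card = ∑ w ∈ s', ∑ x : G, (if x ∈ w.coeff.support then 1 else 0) :=
          Finset.sum_congr rfl fun w _ => e w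
      _ = ∑ x : G, ∑ w ∈ s', (if x ∈ w.coeff.support then 1 else 0) := Finset.sum_comm
      _ = ∑ x : G, m x := Finset.sum_congr rfl fun x _ => (Finset.card_filter _ _).symm
  have hsum2 : ∑ w ∈ s', (PP w).card = ∑ x : G, n x := by
    have e : ∀ w : MonoidAlgebra F G, (PP w).card = ∑ x : G, if x ∈ PP w then 1 else 0 := by
      intro w
      rw [← Finset.card_filter]
      congr 1
      ext x
      simp
    calc ∑ w ∈ s', (PP w).card = ∑ w ∈ s', ∑ x : G, (if x ∈ PP w then 1 else 0) :=
          Finset.sum_congr rfl fun w _ => e w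
      _ = ∑ x : G, ∑ w ∈ s', (if x ∈ PP w then 1 else 0) := Finset.sum_comm
      _ = ∑ x : G, n x := Finset.sum_congr rfl fun x _ => (Finset.card_filter _ _).symm
  have hpt : ∀ x : G, 2 ≤ m x + n x := by
    intro x
    rcases Nat.lt_or_ge (m x) 2 with h | h
    · have h1 : m x = 1 := le_antisymm (by omega) (hm1 x)
      obtain ⟨w, hw, hxw⟩ := hcov x
      have hxPP : x ∈ PP w := Finset.mem_filter.2 ⟨hxw, h1⟩
      have : 1 ≤ n x := Finset.card_pos.2 ⟨w, Finset.mem_filter.2 ⟨hw, hxPP⟩⟩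
      omega
    · omega
  have hbound : 2 * Fintype.card G ≤ k * S.card + k * Hs.ncard := by
    have e1 : ∑ w ∈ s', w.coeff.support.card = k * S.card := by
      have hconst : ∀ w ∈ s', w.coeff.support.card = S.card := by
        intro w hw
        obtain ⟨g, rfl⟩ := hs'range w hw
        exact hvcard g
      calc ∑ w ∈ s', w.coeff.support.card = ∑ _w ∈ s', S.card := Finset.sum_congr rfl hconst
        _ = k * S.card := by rw [Finset.sum_const, smul_eq_mul]
    have e2 : ∑ w ∈ s', (PP w).card ≤ k * Hs.ncard := by
      calc ∑ w ∈ s', (PP w).card ≤ ∑ _w ∈ s', Hs.ncard := Finset.sum_le_sum hPPcard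
        _ = k * Hs.ncard := by rw [Finset.sum_const, smul_eq_mul, hk]
    calc 2 * Fintype.card G = ∑ _x : G, 2 := by
          rw [Finset.sum_const, smul_eq_mul, Finset.card_univ]
          exact mul_comm _ _
      _ ≤ ∑ x : G, (m x + n x) := Finset.sum_le_sum fun x _ => hpt x
      _ = (∑ x : G, m x) + ∑ x : G, n x := Finset.sum_add_distrib
      _ = (∑ w ∈ s', w.coeff.support.card) + ∑ w ∈ s', (PP w).card := by rw [hsum1, hsum2]
      _ ≤ k * S.card + k * Hs.ncard := by rw [e1]; exact Nat.add_le_add_left e2 _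
  -- k ≥ 1
  have hv1 : v 1 = f := by
    show MonoidAlgebra.single (1 : G) (1 : F) * f = f
    rw [← MonoidAlgebra.one_def, one_mul]
  have hfspan : f ∈ Submodule.span F (↑s' : Set (MonoidAlgebra F G)) := by
    rw [← hv1]; exact hvmem 1
  have hk1 : 1 ≤ k := by
    rcases Nat.eq_zero_or_pos k with h0 | h; swap
    · exact h
    exfalso
    have hse : s' = ∅ := Finset.card_eq_zero.1 h0
    rw [hse] at hfspan
    simp only [Finset.coe_empty, Submodule.span_empty, Submodule.mem_bot] at hfspan
    exact hf hfspan
  rcases Nat.lt_or_ge k 2 with hklt | hk2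
  · -- k = 1 case
    have hkeq : k = 1 := le_antisymm (by omega) hk1
    obtain ⟨w, hwone⟩ := Finset.card_eq_one.1 hkeq
    have hspan1 : ∀ g, ∃ c : F, v g = c • w := by
      intro g
      have := hvmem g
      rw [hwone] at this
      simp only [Finset.coe_singleton, Submodule.mem_span_singleton] at this
      obtain ⟨c, hc⟩ := this
      exact ⟨c, hc.symm⟩
    have hfone : ∃ c : F, f = c • w := by
      obtain ⟨c, hc⟩ := hspan1 1
      exact ⟨c, by rw [← hv1]; exact hc⟩
    obtain ⟨c₁, hc₁⟩ := hfone
    have hc₁0 : c₁ ≠ 0 := by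
      rintro rfl; rw [zero_smul] at hc₁; exact hf hc₁
    have hSuniv : S = Finset.univ := by
      apply Finset.eq_univ_iff_forall.2
      intro x
      obtain ⟨c, hc⟩ := hspan1 (x * s₀⁻¹)
      have hvg0 : v (x * s₀⁻¹) ≠ 0 := by
        intro h0
        have hcard := hvcard (x * s₀⁻¹)
        rw [h0] at hcard
        simp only [MonoidAlgebra.coeff_zero, Finsupp.support_zero, Finset.card_empty] at hcard
        exact Finset.card_ne_zero_of_mem hs₀ hcard.symm
      have hc0 : c ≠ 0 := by
        rintro rfl; rw [zero_smul] at hc; exact hvg0 hc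
      have hw' : w = c₁⁻¹ • f := by
        rw [hc₁, smul_smul, inv_mul_cancel₀ hc₁0, one_smul]
      have hvf : v (x * s₀⁻¹) = (c * c₁⁻¹) • f := by
        rw [hc, hw', smul_smul]
      have hsupp_eq : (v (x * s₀⁻¹)).coeff.support = S := by
        rw [hvf, MonoidAlgebra.coeff_smul, Finsupp.support_smul_eq (mul_ne_zero hc0 (inv_ne_zero hc₁0))]
      have hx : x ∈ (v (x * s₀⁻¹)).coeff.support := by
        rw [hvsupp]
        have e : (x * s₀⁻¹)⁻¹ * x = s₀ := by group
        rw [e]; exact hs₀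
      rw [hsupp_eq] at hx
      exact hx
    have hHuniv : Hs = Set.univ := by
      apply Set.eq_univ_of_forall
      intro α
      show (fun β => β * α) '' (↑S : Set G) = ↑S
      rw [hSuniv, Finset.coe_univ]
      exact Set.image_univ_of_surjective fun y => ⟨y * α⁻¹, by group⟩
    have hScard : S.card = Fintype.card G := by rw [hSuniv, Finset.card_univ]
    have hHsCard : Hs.ncard = Fintype.card G := by
      rw [hHuniv, Set.ncard_univ, Nat.card_eq_fintype_card]
    rw [hScard, hHsCard]
    have hd1 : 1 ≤ d := hkeq ▸ hkd
    have : Fintype.card G ≤ Fintype.card G * d := Nat.le_mul_of_pos_right _ (by omega)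
    omega
  · -- main case k ≥ 2
    have hd2 : 2 ≤ d := le_trans hk2 hkd
    have h2a : 2 * Fintype.card G ≤ d * S.card + d * Hs.ncard :=
      le_trans hbound (Nat.add_le_add (Nat.mul_le_mul_right _ hkd) (Nat.mul_le_mul_right _ hkd))
    have h2a' : (2 : ℤ) * (Fintype.card G : ℤ) ≤ (d : ℤ) * S.card + (d : ℤ) * Hs.ncard := by
      exact_mod_cast h2a
    have hHS' : (Hs.ncard : ℤ) ≤ (S.card : ℤ) := by exact_mod_cast hHS
    have hd2' : (2 : ℤ) ≤ (d : ℤ) := by exact_mod_cast hd2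
    have hkey2 : (0 : ℤ) ≤ ((d : ℤ) - 2) * ((S.card : ℤ) - Hs.ncard) :=
      mul_nonneg (by linarith) (by linarith)
    have hfin : (Fintype.card G : ℤ) + S.card ≤ (S.card : ℤ) * d + Hs.ncard := by nlinarith
    exact_mod_cast hfin
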